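/- Let γ = [0; c_1, c_2, ...] and γ' = [0; c'_1, c'_2, ...] be irrational numbers with all partial quotients at most 4. Suppose every block of length 2n+1 occurring infinitely often in (c'_1, c'_2, ...) also occurs infinitely often in (c_1, c_2, ...). Then μ(γ') < μ(γ) + 2·2^{-(n-1)}. -/

import Mathlib

open Filter

/-- Numerators of the convergents of the continued fraction `[a 0; a 1, a 2, ...]`. -/
def cfNum (a : ℕ → ℤ) : ℕ → ℤ
  | 0 => a 0
  | 1 => a 1 * a 0 + 1
  | n + 2 => a (n + 2) * cfNum a (n + 1) + cfNum a n

/-- Denominators of the convergents of the continued fraction `[a 0; a 1, a 2, ...]`. -/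
def cfDen (a : ℕ → ℤ) : ℕ → ℤ
  | 0 => 1
  | 1 => a 1
  | n + 2 => a (n + 2) * cfDen a (n + 1) + cfDen a n

/-- Value of the infinite continued fraction `[a 0; a 1, a 2, ...]`, as the limit of
its convergents. -/
noncomputable def cfVal (a : ℕ → ℤ) : ℝ :=
  limUnder atTop fun n => (cfNum a n : ℝ) / (cfDen a n : ℝ)

/-- Value of the infinite continued fraction `[0; s 0, s 1, s 2, ...]`. -/
noncomputable def cfZero (s : ℕ → ℤ) : ℝ :=
  cfVal fun n => if n = 0 then 0 else s (n - 1)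

/-- Value of the finite continued fraction `[0; l]`. -/
noncomputable def cfFin : List ℤ → ℝ
  | [] => 0
  | x :: xs => 1 / ((x : ℝ) + cfFin xs)

/-- `λ_i(α) = [a_i; a_{i+1}, ...] + [0; a_{i-1}, ..., a_1]` for `α = [a 0; a 1, a 2, ...]`. -/
noncomputable def lambdaCF (a : ℕ → ℤ) (i : ℕ) : ℝ :=
  cfVal (fun n => a (i + n)) + cfFin ((List.range (i - 1)).map fun j => a (i - 1 - j))

/-- `λ_i(B) = [b_i; b_{i-1}, ...] + [0; b_{i+1}, ...]` for a doubly infinite sequence. -/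
noncomputable def lambdaZ (b : ℤ → ℤ) (i : ℤ) : ℝ :=
  cfVal (fun n => b (i - n)) + cfVal fun n => if n = 0 then 0 else b (i + n)

/-- `M(B) = sup_i λ_i(B)`. -/
noncomputable def MZ (b : ℤ → ℤ) : ℝ := ⨆ i : ℤ, lambdaZ b i

/-- The Lagrange constant `μ(α)`, defined by
`μ(α)⁻¹ = liminf_{p ∈ ℤ, q ∈ ℕ} |q (q α - p)|`. -/
noncomputable def lagrangeConst (α : ℝ) : ℝ :=
  (liminf (fun q : ℕ => ⨅ p : ℤ, |(q : ℝ) * ((q : ℝ) * α - (p : ℝ))|) atTop)⁻¹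

/-- `α` is attainable: `|α - p/q| ≤ 1/(μ(α) q²)` has infinitely many integer solutions. -/
def Attainable (α : ℝ) : Prop :=
  {pq : ℤ × ℤ | 0 < pq.2 ∧
    |α - (pq.1 : ℝ) / (pq.2 : ℝ)| ≤ 1 / (lagrangeConst α * (pq.2 : ℝ) ^ 2)}.Infinite

/-- The Lagrange spectrum: the set of values of `μ(α)` over irrational `α`. -/
def LagrangeSpectrum : Set ℝ := {x | ∃ α : ℝ, Irrational α ∧ lagrangeConst α = x}

/-- The doubly infinite sequence `b` is weakly associated with the number whose partial
quotients are `a 1, a 2, ...`: every central pattern `(b_{-i}, ..., b_i)` occurs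
infinitely often in `(a 1, a 2, ...)`. -/
def WeaklyAssoc (b : ℤ → ℤ) (a : ℕ → ℤ) : Prop :=
  ∀ i : ℕ, ∃ᶠ k in atTop, ∀ j : ℕ, j ≤ 2 * i → a (k + 1 + j) = b ((j : ℤ) - (i : ℤ))

namespace S13
open Topology

/-- finite continued fraction with a "tail" value: `val [b₁,…,bₘ] x = [0; b₁, …, bₘ + x]`-ish,
more precisely `1/(b₁ + 1/(b₂ + ⋯ + 1/(bₘ + x)))`. -/
noncomputable def val : List ℤ → ℝ → ℝ
  | [], x => x
  | b :: l, x => 1 / ((b : ℝ) + val l x)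

@[simp] lemma val_nil (x : ℝ) : val [] x = x := rfl

@[simp] lemma val_cons (b : ℤ) (l : List ℤ) (x : ℝ) :
    val (b :: l) x = 1 / ((b : ℝ) + val l x) := rfl

lemma val_mem_Icc {l : List ℤ} (hl : ∀ b ∈ l, 1 ≤ b) {x : ℝ} (hx : x ∈ Set.Icc (0:ℝ) 1) :
    val l x ∈ Set.Icc (0:ℝ) 1 := by
  induction l with
  | nil => exact hx
  | cons b l ih =>
    have hb : (1:ℝ) ≤ (b:ℤ) := by exact_mod_cast hl b List.mem_cons_self
    have h := ih (fun b hb => hl b (List.mem_cons_of_mem _ hb))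
    have h0 : (0:ℝ) ≤ val l x := h.1
    have hpos : (0:ℝ) < (b:ℝ) + val l x := by linarith
    constructor
    · rw [val_cons]; positivity
    · rw [val_cons, div_le_one (by linarith)]; linarith

lemma val_append (l₁ l₂ : List ℤ) (x : ℝ) :
    val (l₁ ++ l₂) x = val l₁ (val l₂ x) := by
  induction l₁ with
  | nil => rfl
  | cons b l ih => simp [ih]

/-- the contraction estimate. -/
lemma val_contract : ∀ (l : List ℤ), (∀ b ∈ l, 1 ≤ b) → ∀ x y : ℝ,
    x ∈ Set.Icc (0:ℝ) 1 → y ∈ Set.Icc (0:ℝ) 1 →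
    |val l x - val l y| ≤ (1/2 : ℝ) ^ l.length
  | [], _, x, y, hx, hy => by
      simp only [val_nil, List.length_nil, pow_zero]
      rw [abs_sub_le_iff]; constructor <;> linarith [hx.1, hx.2, hy.1, hy.2]
  | [b], hl, x, y, hx, hy => by
      have hb : (1:ℝ) ≤ (b:ℤ) := by exact_mod_cast hl b (by simp)
      simp only [val_cons, val_nil, List.length_cons, List.length_nil, pow_one]
      have hbx : (0:ℝ) < b + x := by linarith [hx.1]
      have hby : (0:ℝ) < b + y := by linarith [hy.1]
      have key : 1/((b:ℝ)+x) - 1/((b:ℝ)+y) = (y - x)/(((b:ℝ)+x)*((b:ℝ)+y)) := by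
        field_simp
        try ring
      rw [key, abs_div, abs_of_pos (mul_pos hbx hby), div_le_iff₀ (mul_pos hbx hby)]
      rcases le_total x y with h | h
      · rw [abs_of_nonneg (by linarith)]
        nlinarith [hx.1, hy.1, hy.2, hx.2, mul_nonneg hx.1 hy.1]
      · rw [abs_of_nonpos (by linarith)]
        nlinarith [hx.1, hy.1, hy.2, hx.2, mul_nonneg hx.1 hy.1]
  | (b :: c :: l), hl, x, y, hx, hy => by
      have ih := val_contract l (fun i hi => hl i (by simp [hi])) x y hx hy
      have hb : (1:ℝ) ≤ (b:ℤ) := by exact_mod_cast hl b (by simp)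
      have hc : (1:ℝ) ≤ (c:ℤ) := by exact_mod_cast hl c (by simp)
      have hvx := val_mem_Icc (l := l) (fun i hi => hl i (by simp [hi])) hx
      have hvy := val_mem_Icc (l := l) (fun i hi => hl i (by simp [hi])) hy
      set w := val l x with hw
      set w' := val l y with hw'
      have hcw : (0:ℝ) < c + w := by linarith [hvx.1]
      have hcw' : (0:ℝ) < c + w' := by linarith [hvy.1]
      have hbu : (0:ℝ) < b + 1/(c + w) := by positivity
      have hbu' : (0:ℝ) < b + 1/(c + w') := by positivity
      have key : val (b :: c :: l) x - val (b :: c :: l) y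
          = (w - w') / (((b * (c + w) + 1)) * ((b * (c + w') + 1))) := by
        simp only [val_cons, ← hw, ← hw']
        field_simp
        ring
      have h2 : (1:ℝ) ≤ b * (c + w) := by nlinarith [hvx.1]
      have h2' : (1:ℝ) ≤ b * (c + w') := by nlinarith [hvy.1]
      have hprod : (0:ℝ) < (b * (c + w) + 1) * ((b:ℝ) * (c + w') + 1) :=
        mul_pos (by linarith) (by linarith)
      have hd : (4:ℝ) ≤ (b * (c + w) + 1) * (b * (c + w') + 1) := by nlinarith
      have hlen : ((b :: c :: l).length) = l.length + 2 := by simp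
      rw [key, abs_div, abs_of_pos hprod, div_le_iff₀ hprod, hlen, pow_add]
      have hpw : (0:ℝ) < (1/2:ℝ)^l.length := by positivity
      calc |w - w'| ≤ (1/2:ℝ)^l.length := ih
        _ ≤ (1/2:ℝ)^l.length * ((1/2)^2 * ((b * (c + w) + 1) * (b * (c + w') + 1))) := by
            nlinarith
        _ = (1/2:ℝ)^l.length * (1/2)^2 * ((b * (c + w) + 1) * (b * (c + w') + 1)) := by ring

section CF

variable {b : ℕ → ℤ}

/-- convergents as real numbers -/
noncomputable def X (b : ℕ → ℤ) (k : ℕ) : ℝ := (cfNum b k : ℝ) / (cfDen b k : ℝ)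

lemma cfNum_two (k : ℕ) : cfNum b (k+2) = b (k+2) * cfNum b (k+1) + cfNum b k := rfl
lemma cfDen_two (k : ℕ) : cfDen b (k+2) = b (k+2) * cfDen b (k+1) + cfDen b k := rfl

theorem cfDen_pos (hb : ∀ k, 1 ≤ b (k+1)) : ∀ k, 1 ≤ cfDen b k
  | 0 => le_refl 1
  | 1 => hb 0
  | (k+2) => by
      have h1 := cfDen_pos hb (k+1)
      have h2 := cfDen_pos hb k
      rw [cfDen_two]
      nlinarith [hb (k+1)]

theorem cfDen_ge (hb : ∀ k, 1 ≤ b (k+1)) : ∀ k : ℕ, (k:ℤ) ≤ cfDen b k := by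
  have step : ∀ k, cfDen b (k+1) + 1 ≤ cfDen b (k+2) := fun k => by
    rw [cfDen_two]; nlinarith [cfDen_pos hb (k+1), cfDen_pos hb k, hb (k+1)]
  intro k
  induction k with
  | zero => show (0:ℤ) ≤ cfDen b 0; show (0:ℤ) ≤ 1; norm_num
  | succ k ih =>
    cases k with
    | zero => simpa using cfDen_pos hb 1
    | succ k =>
        have h1 := step k
        show ((k+2:ℕ):ℤ) ≤ cfDen b (k+2)
        push_cast
        push_cast at ih
        omega

theorem cfDen_mono (hb : ∀ k, 1 ≤ b (k+1)) : ∀ k, cfDen b k ≤ cfDen b (k+1)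
  | 0 => hb 0
  | (k+1) => by
      have h1 := cfDen_pos hb (k+1)
      have h2 := cfDen_pos hb k
      rw [cfDen_two]
      nlinarith [hb (k+1)]

theorem cfNum_pos (hb : ∀ k, 1 ≤ b (k+1)) (hb0 : 1 ≤ b 0) : ∀ k, 1 ≤ cfNum b k
  | 0 => hb0
  | 1 => by show 1 ≤ b 1 * b 0 + 1; nlinarith [hb 0]
  | (k+2) => by
      have h1 := cfNum_pos hb hb0 (k+1)
      have h2 := cfNum_pos hb hb0 k
      rw [cfNum_two]
      nlinarith [hb (k+1)]

theorem cfDen_posR (hb : ∀ k, 1 ≤ b (k+1)) (k : ℕ) : (0:ℝ) < (cfDen b k : ℝ) := by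
  exact_mod_cast lt_of_lt_of_le zero_lt_one (cfDen_pos hb k)

theorem cf_det : ∀ k, cfNum b (k+1) * cfDen b k - cfNum b k * cfDen b (k+1) = (-1)^k := by
  intro k
  induction k with
  | zero => show (b 1 * b 0 + 1) * 1 - b 0 * b 1 = 1; ring
  | succ k ih =>
      rw [cfNum_two, cfDen_two, pow_succ]
      linear_combination (-1 : ℤ) * ih

theorem cf_det2 (k : ℕ) :
    cfNum b (k+2) * cfDen b k - cfNum b k * cfDen b (k+2) = b (k+2) * (-1)^k := by
  rw [cfNum_two, cfDen_two]
  linear_combination (b (k+2)) * cf_det (b := b) k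

theorem X_diff (hb : ∀ k, 1 ≤ b (k+1)) (k : ℕ) :
    X b (k+1) - X b k = (-1)^k / ((cfDen b k : ℝ) * (cfDen b (k+1) : ℝ)) := by
  have h0 := cfDen_posR hb k
  have h1 := cfDen_posR hb (k+1)
  have hdet : (cfNum b (k+1) : ℝ) * (cfDen b k : ℝ) - (cfNum b k : ℝ) * (cfDen b (k+1) : ℝ)
      = (-1)^k := by exact_mod_cast cf_det (b := b) k
  rw [X, X, div_sub_div _ _ (ne_of_gt h1) (ne_of_gt h0),
    div_eq_div_iff (by positivity) (by positivity)]
  linear_combination ((cfDen b k : ℝ) * (cfDen b (k+1) : ℝ)) * hdet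

theorem X_diff2 (hb : ∀ k, 1 ≤ b (k+1)) (k : ℕ) :
    X b (k+2) - X b k = ((b (k+2) : ℝ)) * (-1)^k / ((cfDen b k : ℝ) * (cfDen b (k+2) : ℝ)) := by
  have h0 := cfDen_posR hb k
  have h1 := cfDen_posR hb (k+2)
  have hdet : (cfNum b (k+2) : ℝ) * (cfDen b k : ℝ) - (cfNum b k : ℝ) * (cfDen b (k+2) : ℝ)
      = (b (k+2) : ℝ) * (-1)^k := by exact_mod_cast cf_det2 (b := b) k
  rw [X, X, div_sub_div _ _ (ne_of_gt h1) (ne_of_gt h0),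
    div_eq_div_iff (by positivity) (by positivity)]
  linear_combination ((cfDen b k : ℝ) * (cfDen b (k+2) : ℝ)) * hdet

theorem X_even_succ_lt (hb : ∀ k, 1 ≤ b (k+1)) (k : ℕ) : X b (2*k) < X b (2*k+2) := by
  have := X_diff2 hb (2*k)
  have hbb : (1:ℝ) ≤ (b (2*k+2) : ℝ) := by exact_mod_cast hb (2*k+1)
  have h0 := cfDen_posR hb (2*k)
  have h1 := cfDen_posR hb (2*k+2)
  have hpos : (0:ℝ) < (b (2*k+2) : ℝ) * (-1:ℝ)^(2*k) / ((cfDen b (2*k) : ℝ) * (cfDen b (2*k+2) : ℝ)) := by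
    rw [Even.neg_one_pow (by exact even_two_mul k)]
    positivity
  linarith [this, hpos]

theorem X_odd_succ_lt (hb : ∀ k, 1 ≤ b (k+1)) (k : ℕ) : X b (2*k+3) < X b (2*k+1) := by
  have := X_diff2 hb (2*k+1)
  have hbb : (1:ℝ) ≤ (b (2*k+3) : ℝ) := by exact_mod_cast hb (2*k+2)
  have h0 := cfDen_posR hb (2*k+1)
  have h1 := cfDen_posR hb (2*k+3)
  have hneg : (b (2*k+3) : ℝ) * (-1:ℝ)^(2*k+1) / ((cfDen b (2*k+1) : ℝ) * (cfDen b (2*k+3) : ℝ)) < 0 := by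
    rw [Odd.neg_one_pow ⟨k, by ring⟩]
    have : (0:ℝ) < (b (2*k+3) : ℝ) := by linarith
    rw [mul_neg_one, neg_div]
    simp only [neg_neg, Left.neg_neg_iff]
    positivity
  linarith [this, hneg]

theorem X_even_lt_odd (hb : ∀ k, 1 ≤ b (k+1)) (k : ℕ) : X b (2*k) < X b (2*k+1) := by
  have := X_diff hb (2*k)
  have h0 := cfDen_posR hb (2*k)
  have h1 := cfDen_posR hb (2*k+1)
  have hpos : (0:ℝ) < (-1:ℝ)^(2*k) / ((cfDen b (2*k) : ℝ) * (cfDen b (2*k+1) : ℝ)) := by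
    rw [Even.neg_one_pow (by exact even_two_mul k)]
    positivity
  linarith [this, hpos]

theorem X_even_mono (hb : ∀ k, 1 ≤ b (k+1)) : Monotone (fun k => X b (2*k)) :=
  monotone_nat_of_le_succ (fun k => by
    have := X_even_succ_lt hb k
    have h : 2*(k+1) = 2*k+2 := by ring
    rw [h]; linarith)

theorem X_odd_anti (hb : ∀ k, 1 ≤ b (k+1)) : Antitone (fun k => X b (2*k+1)) :=
  antitone_nat_of_succ_le (fun k => by
    have := X_odd_succ_lt hb k
    have h : 2*(k+1)+1 = 2*k+3 := by ring
    rw [h]; linarith)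

theorem X_cross (hb : ∀ k, 1 ≤ b (k+1)) (k j : ℕ) : X b (2*k) < X b (2*j+1) := by
  rcases le_total k j with h | h
  · exact lt_of_le_of_lt (X_even_mono hb h) (X_even_lt_odd hb j)
  · exact lt_of_lt_of_le (X_even_lt_odd hb k) (X_odd_anti hb h)

theorem cf_lim (hb : ∀ k, 1 ≤ b (k+1)) :
    Tendsto (X b) atTop (𝓝 (cfVal b)) ∧ (∀ k, X b (2*k) < cfVal b)
      ∧ (∀ k, cfVal b < X b (2*k+1)) := by
  set α := ⨆ k, X b (2*k) with hα
  have bdd : BddAbove (Set.range (fun k => X b (2*k))) := ⟨X b 1, by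
    rintro x ⟨k, rfl⟩
    exact le_of_lt (by simpa using X_cross hb k 0)⟩
  have hle : ∀ k, X b (2*k) ≤ α := fun k => le_ciSup bdd k
  have hge : ∀ j, α ≤ X b (2*j+1) := fun j => ciSup_le (fun k => le_of_lt (X_cross hb k j))
  have hlt : ∀ k, X b (2*k) < α := fun k => by
    have h1 := X_even_succ_lt hb k
    have h2 := hle (k+1)
    rw [show 2*(k+1) = 2*k+2 by ring] at h2
    linarith
  have hgt : ∀ k, α < X b (2*k+1) := fun k => by
    have h1 := X_odd_succ_lt hb k
    have h2 := hge (k+1)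
    rw [show 2*(k+1)+1 = 2*k+3 by ring] at h2
    linarith
  have key : ∀ k : ℕ, 1 ≤ k → ‖X b k - α‖ ≤ ((k:ℝ))⁻¹ := by
    intro k hk
    have hQk := cfDen_posR hb k
    have hQk1 := cfDen_posR hb (k+1)
    have hQ : (k:ℝ) ≤ (cfDen b k : ℝ) * (cfDen b (k+1) : ℝ) := by
      have h1 : (k:ℝ) ≤ (cfDen b k : ℝ) := by exact_mod_cast cfDen_ge hb k
      have h2 : (1:ℝ) ≤ (cfDen b (k+1) : ℝ) := by exact_mod_cast cfDen_pos hb (k+1)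
      nlinarith
    have hdiff : |X b (k+1) - X b k| = ((cfDen b k:ℝ) * (cfDen b (k+1):ℝ))⁻¹ := by
      rw [X_diff hb k, abs_div, abs_pow, abs_neg, abs_one, one_pow, abs_of_pos (by positivity)]
      simp [one_div]
    have hbound : |X b k - α| ≤ |X b (k+1) - X b k| := by
      rcases Nat.even_or_odd k with ⟨j, hj⟩ | ⟨j, hj⟩
      · have hk2 : k = 2*j := by omega
        subst hk2
        have h1 : X b (2*j) ≤ α := hle j
        have h2 : α ≤ X b (2*j+1) := hge j
        have h3 := X_even_lt_odd hb j
        rw [abs_of_nonpos (by linarith), abs_of_nonneg (show (0:ℝ) ≤ X b (2*j+1) - X b (2*j) by linarith)]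
        linarith
      · have hk2 : k = 2*j+1 := by omega
        subst hk2
        have h1 : α ≤ X b (2*j+1) := hge j
        have h2 : X b (2*j+2) ≤ α := by
          have := hle (j+1); rwa [show 2*(j+1) = 2*j+2 by ring] at this
        have e : (2*j+1+1) = 2*j+2 := rfl
        rw [e, abs_of_nonneg (by linarith), abs_of_nonpos (show X b (2*j+2) - X b (2*j+1) ≤ 0 by linarith)]
        linarith
    have hfin : |X b k - α| ≤ ((cfDen b k:ℝ) * (cfDen b (k+1):ℝ))⁻¹ := hdiff ▸ hbound
    have hkpos : (0:ℝ) < (k:ℝ) := by exact_mod_cast hk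
    calc ‖X b k - α‖ = |X b k - α| := rfl
      _ ≤ ((cfDen b k:ℝ) * (cfDen b (k+1):ℝ))⁻¹ := hfin
      _ ≤ ((k:ℝ))⁻¹ := by
          apply inv_anti₀ hkpos hQ
  have h0 : Tendsto (fun k : ℕ => X b k - α) atTop (𝓝 0) :=
    squeeze_zero_norm' (eventually_atTop.2 ⟨1, fun k hk => key k hk⟩)
      tendsto_inv_atTop_nhds_zero_nat
  have hT : Tendsto (X b) atTop (𝓝 α) := by
    have h1 := h0.add (tendsto_const_nhds (x := α))
    simpa using h1
  have hval : cfVal b = α := hT.limUnder_eq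
  rw [hval]
  exact ⟨hT, hlt, hgt⟩

theorem cf_tendsto (hb : ∀ k, 1 ≤ b (k+1)) : Tendsto (X b) atTop (𝓝 (cfVal b)) :=
  (cf_lim hb).1

theorem cfVal_gt (hb : ∀ k, 1 ≤ b (k+1)) (k : ℕ) : X b (2*k) < cfVal b :=
  (cf_lim hb).2.1 k

theorem cfVal_lt (hb : ∀ k, 1 ≤ b (k+1)) (k : ℕ) : cfVal b < X b (2*k+1) :=
  (cf_lim hb).2.2 k

theorem cfVal_gt_b0 (hb : ∀ k, 1 ≤ b (k+1)) : (b 0 : ℝ) < cfVal b := by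
  have h := cfVal_gt hb 0
  have e : X b 0 = (b 0 : ℝ) := by
    show ((cfNum b 0 : ℤ):ℝ)/((cfDen b 0 : ℤ):ℝ) = _
    show ((b 0 : ℤ):ℝ)/((1 : ℤ):ℝ) = _
    norm_num
  rw [← e]
  simpa using h

theorem cfVal_lt_b0_add_one (hb : ∀ k, 1 ≤ b (k+1)) : cfVal b < (b 0 : ℝ) + 1 := by
  have h := cfVal_lt hb 0
  have hb1 : (1:ℝ) ≤ (b 1 : ℝ) := by exact_mod_cast hb 0
  have e : X b 1 ≤ (b 0 : ℝ) + 1 := by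
    show ((cfNum b 1 : ℤ):ℝ)/((cfDen b 1 : ℤ):ℝ) ≤ _
    show ((b 1 * b 0 + 1 : ℤ):ℝ)/((b 1 : ℤ):ℝ) ≤ _
    push_cast
    rw [div_le_iff₀ (by linarith)]
    nlinarith
  simpa using lt_of_lt_of_le h e

/-- tail value `[b k; b (k+1), …]` -/
noncomputable def Tail (b : ℕ → ℤ) (k : ℕ) : ℝ := cfVal (fun j => b (k + j))

theorem cf_split_num (b : ℕ → ℤ) (k : ℕ) : ∀ m : ℕ,
    cfNum b (k+2+m) = cfNum b (k+1) * cfNum (fun j => b (k+2+j)) m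
      + cfNum b k * cfDen (fun j => b (k+2+j)) m
  | 0 => by
      show cfNum b (k+2) = cfNum b (k+1) * b (k+2+0) + cfNum b k * 1
      rw [cfNum_two]; ring_nf
  | 1 => by
      show cfNum b (k+3)
          = cfNum b (k+1) * (b (k+2+1) * b (k+2+0) + 1) + cfNum b k * b (k+2+1)
      have e1 : cfNum b (k+3) = b (k+3) * cfNum b (k+2) + cfNum b (k+1) := cfNum_two (k+1)
      have e2 : cfNum b (k+2) = b (k+2) * cfNum b (k+1) + cfNum b k := cfNum_two k
      rw [e1, e2]
      show _ = cfNum b (k+1) * (b (k+3) * b (k+2) + 1) + cfNum b k * b (k+3)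
      ring
  | (m+2) => by
      have ih1 := cf_split_num b k (m+1)
      have ih0 := cf_split_num b k m
      show cfNum b ((k+2+m)+2) = cfNum b (k+1) * cfNum (fun j => b (k+2+j)) (m+2)
          + cfNum b k * cfDen (fun j => b (k+2+j)) (m+2)
      rw [cfNum_two (k+2+m), cfNum_two (b := fun j => b (k+2+j)) m,
        cfDen_two (b := fun j => b (k+2+j)) m]
      show b (k+2+m+2) * cfNum b (k+2+(m+1)) + cfNum b (k+2+m)
          = cfNum b (k+1) * (b (k+2+(m+2)) * cfNum (fun j => b (k+2+j)) (m+1)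
              + cfNum (fun j => b (k+2+j)) m)
            + cfNum b k * (b (k+2+(m+2)) * cfDen (fun j => b (k+2+j)) (m+1)
              + cfDen (fun j => b (k+2+j)) m)
      have e : b (k+2+(m+2)) = b (k+2+m+2) := rfl
      rw [e, ih1, ih0]
      ring

theorem cf_split_den (b : ℕ → ℤ) (k : ℕ) : ∀ m : ℕ,
    cfDen b (k+2+m) = cfDen b (k+1) * cfNum (fun j => b (k+2+j)) m
      + cfDen b k * cfDen (fun j => b (k+2+j)) m
  | 0 => by
      show cfDen b (k+2) = cfDen b (k+1) * b (k+2+0) + cfDen b k * 1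
      rw [cfDen_two]; ring_nf
  | 1 => by
      show cfDen b (k+3)
          = cfDen b (k+1) * (b (k+2+1) * b (k+2+0) + 1) + cfDen b k * b (k+2+1)
      have e1 : cfDen b (k+3) = b (k+3) * cfDen b (k+2) + cfDen b (k+1) := cfDen_two (k+1)
      have e2 : cfDen b (k+2) = b (k+2) * cfDen b (k+1) + cfDen b k := cfDen_two k
      rw [e1, e2]
      show _ = cfDen b (k+1) * (b (k+3) * b (k+2) + 1) + cfDen b k * b (k+3)
      ring
  | (m+2) => by
      have ih1 := cf_split_den b k (m+1)
      have ih0 := cf_split_den b k m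
      show cfDen b ((k+2+m)+2) = cfDen b (k+1) * cfNum (fun j => b (k+2+j)) (m+2)
          + cfDen b k * cfDen (fun j => b (k+2+j)) (m+2)
      rw [cfDen_two (k+2+m), cfNum_two (b := fun j => b (k+2+j)) m,
        cfDen_two (b := fun j => b (k+2+j)) m]
      show b (k+2+m+2) * cfDen b (k+2+(m+1)) + cfDen b (k+2+m)
          = cfDen b (k+1) * (b (k+2+(m+2)) * cfNum (fun j => b (k+2+j)) (m+1)
              + cfNum (fun j => b (k+2+j)) m)
            + cfDen b k * (b (k+2+(m+2)) * cfDen (fun j => b (k+2+j)) (m+1)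
              + cfDen (fun j => b (k+2+j)) m)
      have e : b (k+2+(m+2)) = b (k+2+m+2) := rfl
      rw [e, ih1, ih0]
      ring

theorem tail_hb (hb : ∀ k, 1 ≤ b (k+1)) (k : ℕ) : ∀ j, 1 ≤ (fun j => b (k+1+j)) (j+1) :=
  fun j => hb (k+1+j)

theorem Tail_gt_one (hb : ∀ k, 1 ≤ b (k+1)) (k : ℕ) : 1 < Tail b (k+1) := by
  have h := cfVal_gt_b0 (b := fun j => b (k+1+j)) (tail_hb hb k)
  have h0 : (1:ℝ) ≤ ((fun j => b (k+1+j)) 0 : ℤ) := by exact_mod_cast hb k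
  exact lt_of_le_of_lt h0 h

theorem Tail_lt (hb : ∀ k, 1 ≤ b (k+1)) (hb4 : ∀ k, b (k+1) ≤ 4) (k : ℕ) :
    Tail b (k+1) < 5 := by
  have h := cfVal_lt_b0_add_one (b := fun j => b (k+1+j)) (tail_hb hb k)
  have h0 : ((fun j => b (k+1+j)) 0 : ℝ) ≤ 4 := by exact_mod_cast hb4 k
  have : Tail b (k+1) < ((fun j => b (k+1+j)) 0 : ℝ) + 1 := h
  linarith

theorem cf_mobius (hb : ∀ k, 1 ≤ b (k+1)) (k : ℕ) :
    cfVal b = ((cfNum b (k+1) : ℝ) * Tail b (k+2) + (cfNum b k : ℝ))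
      / ((cfDen b (k+1) : ℝ) * Tail b (k+2) + (cfDen b k : ℝ)) := by
  set s : ℕ → ℤ := fun j => b (k+2+j) with hs_def
  have hs : ∀ j, 1 ≤ s (j+1) := fun j => hb (k+2+j)
  have hs0 : 1 ≤ s 0 := hb (k+1)
  have ht : Tail b (k+2) = cfVal s := rfl
  have htgt : (1:ℝ) ≤ Tail b (k+2) := by
    rw [ht]
    have := cfVal_gt_b0 (b := s) hs
    have h0 : (1:ℝ) ≤ (s 0 : ℝ) := by exact_mod_cast hs0
    linarith
  have hPpos : ∀ m, 1 ≤ cfNum s m := cfNum_pos hs hs0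
  have hQpos : ∀ m, 1 ≤ cfDen s m := cfDen_pos hs
  have hq1 := cfDen_posR hb (k+1)
  have hq0 := cfDen_posR hb k
  have key : ∀ m, X b (k+2+m)
      = ((cfNum b (k+1) : ℝ) * X s m + (cfNum b k : ℝ))
        / ((cfDen b (k+1) : ℝ) * X s m + (cfDen b k : ℝ)) := by
    intro m
    have hP : (0:ℝ) < (cfNum s m : ℝ) := by exact_mod_cast lt_of_lt_of_le zero_lt_one (hPpos m)
    have hQ : (0:ℝ) < (cfDen s m : ℝ) := by exact_mod_cast lt_of_lt_of_le zero_lt_one (hQpos m)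
    have hnum : (cfNum b (k+2+m) : ℝ)
        = (cfNum b (k+1) : ℝ) * (cfNum s m : ℝ) + (cfNum b k : ℝ) * (cfDen s m : ℝ) := by
      exact_mod_cast cf_split_num b k m
    have hden : (cfDen b (k+2+m) : ℝ)
        = (cfDen b (k+1) : ℝ) * (cfNum s m : ℝ) + (cfDen b k : ℝ) * (cfDen s m : ℝ) := by
      exact_mod_cast cf_split_den b k m
    have hdpos : (0:ℝ) < (cfDen b (k+1) : ℝ) * (cfNum s m : ℝ) + (cfDen b k : ℝ) * (cfDen s m : ℝ) := by
      positivity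
    have hXpos : (0:ℝ) < (cfDen b (k+1) : ℝ) * X s m + (cfDen b k : ℝ) := by
      have : (0:ℝ) < X s m := by rw [X]; positivity
      positivity
    rw [X, hnum, hden, X]
    rw [div_eq_div_iff (by positivity) (by positivity)]
    field_simp
  have hT1 : Tendsto (fun m => X b (k+2+m)) atTop (𝓝 (cfVal b)) := by
    have h := (cf_tendsto hb).comp (tendsto_add_atTop_nat (k+2))
    have e : (fun m => X b (k+2+m)) = (X b) ∘ (fun n => n + (k+2)) := by
      funext m; simp [Function.comp, Nat.add_comm]
    rw [e]; exact h
  have hT2 : Tendsto (fun m => X s m) atTop (𝓝 (cfVal s)) := cf_tendsto hs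
  have hden_lim : (0:ℝ) < (cfDen b (k+1) : ℝ) * cfVal s + (cfDen b k : ℝ) := by
    have : (0:ℝ) < cfVal s := by
      have := cfVal_gt_b0 (b := s) hs
      have h0 : (0:ℝ) < (s 0 : ℝ) := by exact_mod_cast hs0
      linarith
    positivity
  have hT3 : Tendsto (fun m => ((cfNum b (k+1) : ℝ) * X s m + (cfNum b k : ℝ))
      / ((cfDen b (k+1) : ℝ) * X s m + (cfDen b k : ℝ))) atTop
      (𝓝 (((cfNum b (k+1) : ℝ) * cfVal s + (cfNum b k : ℝ))
        / ((cfDen b (k+1) : ℝ) * cfVal s + (cfDen b k : ℝ)))) := by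
    apply Tendsto.div
    · exact (hT2.const_mul _).add tendsto_const_nhds
    · exact (hT2.const_mul _).add tendsto_const_nhds
    · exact ne_of_gt hden_lim
  have := tendsto_nhds_unique hT1 (by simpa only [← key] using hT3)
  rw [this, ht]

theorem cf_err (hb : ∀ k, 1 ≤ b (k+1)) (k : ℕ) :
    (cfDen b (k+1) : ℝ) * cfVal b - (cfNum b (k+1) : ℝ)
      = (-1)^(k+1) / ((cfDen b (k+1) : ℝ) * Tail b (k+2) + (cfDen b k : ℝ)) := by
  have hq1 := cfDen_posR hb (k+1)
  have hq0 := cfDen_posR hb k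
  have htgt : (1:ℝ) < Tail b (k+2) := Tail_gt_one hb (k+1)
  have hden : (0:ℝ) < (cfDen b (k+1) : ℝ) * Tail b (k+2) + (cfDen b k : ℝ) := by positivity
  have hdet : (cfNum b (k+1) : ℝ) * (cfDen b k : ℝ) - (cfNum b k : ℝ) * (cfDen b (k+1) : ℝ)
      = (-1)^k := by exact_mod_cast cf_det (b := b) k
  set T := Tail b (k+2) with hT
  set D := (cfDen b (k+1) : ℝ) * T + (cfDen b k : ℝ) with hD
  have hα : cfVal b = ((cfNum b (k+1) : ℝ) * T + (cfNum b k : ℝ))/D := cf_mobius hb k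
  have hmul : ((cfDen b (k+1) : ℝ) * cfVal b - (cfNum b (k+1) : ℝ)) * D = (-1)^(k+1) := by
    rw [hα, pow_succ]
    field_simp
    linear_combination (-1 : ℝ) * hdet
  exact (eq_div_iff (ne_of_gt hden)).mpr hmul

theorem Tail_rec_num (b : ℕ → ℤ) : ∀ m : ℕ,
    cfNum b (1+m) = b 0 * cfNum (fun j => b (1+j)) m + cfDen (fun j => b (1+j)) m
  | 0 => by
      show b 1 * b 0 + 1 = b 0 * b (1+0) + 1
      ring_nf
  | 1 => by
      show cfNum b 2 = b 0 * (b (1+1) * b (1+0) + 1) + b (1+1)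
      rw [cfNum_two 0]
      show b 2 * (b 1 * b 0 + 1) + b 0 = _
      ring_nf
  | (m+2) => by
      have ih1 := Tail_rec_num b (m+1)
      have ih0 := Tail_rec_num b m
      show cfNum b ((1+m)+2) = b 0 * cfNum (fun j => b (1+j)) (m+2) + cfDen (fun j => b (1+j)) (m+2)
      rw [cfNum_two (1+m), cfNum_two (b := fun j => b (1+j)) m, cfDen_two (b := fun j => b (1+j)) m]
      show b (1+m+2) * cfNum b (1+(m+1)) + cfNum b (1+m)
          = b 0 * (b (1+(m+2)) * cfNum (fun j => b (1+j)) (m+1) + cfNum (fun j => b (1+j)) m)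
            + (b (1+(m+2)) * cfDen (fun j => b (1+j)) (m+1) + cfDen (fun j => b (1+j)) m)
      have e : b (1+(m+2)) = b (1+m+2) := rfl
      rw [e, ih1, ih0]
      ring

theorem Tail_rec_den (b : ℕ → ℤ) : ∀ m : ℕ,
    cfDen b (1+m) = cfNum (fun j => b (1+j)) m
  | 0 => by show b 1 = b (1+0); rfl
  | 1 => by
      show cfDen b 2 = b (1+1) * b (1+0) + 1
      rw [cfDen_two 0]
      show b 2 * b 1 + 1 = _
      ring_nf
  | (m+2) => by
      have ih1 := Tail_rec_den b (m+1)
      have ih0 := Tail_rec_den b m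
      show cfDen b ((1+m)+2) = cfNum (fun j => b (1+j)) (m+2)
      rw [cfDen_two (1+m), cfNum_two (b := fun j => b (1+j)) m]
      show b (1+m+2) * cfDen b (1+(m+1)) + cfDen b (1+m)
          = b (1+(m+2)) * cfNum (fun j => b (1+j)) (m+1) + cfNum (fun j => b (1+j)) m
      have e : b (1+(m+2)) = b (1+m+2) := rfl
      rw [e, ih1, ih0]

/-- the recurrence `[b₀; b₁, …] = b₀ + 1/[b₁; b₂, …]` for sequences with all entries ≥ 1
from index 1 on and `b 0 ≥ 1` not required. -/
theorem cfVal_rec (hb : ∀ k, 1 ≤ b (k+1)) :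
    cfVal b = (b 0 : ℝ) + 1 / cfVal (fun j => b (1+j)) := by
  set s : ℕ → ℤ := fun j => b (1+j) with hs_def
  have hs : ∀ j, 1 ≤ s (j+1) := fun j => hb (1+j)
  have hs0 : 1 ≤ s 0 := hb 0
  have hPpos : ∀ m, 1 ≤ cfNum s m := cfNum_pos hs hs0
  have htpos : (0:ℝ) < cfVal s := by
    have := cfVal_gt_b0 (b := s) hs
    have h0 : (0:ℝ) < (s 0 : ℝ) := by exact_mod_cast hs0
    linarith
  have key : ∀ m, X b (1+m) = (b 0 : ℝ) + 1 / X s m := by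
    intro m
    have hP : (0:ℝ) < (cfNum s m : ℝ) := by exact_mod_cast lt_of_lt_of_le zero_lt_one (hPpos m)
    have hQ : (0:ℝ) < (cfDen s m : ℝ) := by exact_mod_cast lt_of_lt_of_le zero_lt_one (cfDen_pos hs m)
    have hnum : (cfNum b (1+m) : ℝ) = (b 0 : ℝ) * (cfNum s m : ℝ) + (cfDen s m : ℝ) := by
      exact_mod_cast Tail_rec_num b m
    have hden : (cfDen b (1+m) : ℝ) = (cfNum s m : ℝ) := by
      exact_mod_cast Tail_rec_den b m
    rw [X, hnum, hden, X, one_div_div]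
    field_simp
  have hT1 : Tendsto (fun m => X b (1+m)) atTop (𝓝 (cfVal b)) := by
    have h := (cf_tendsto hb).comp (tendsto_add_atTop_nat 1)
    have e : (fun m => X b (1+m)) = (X b) ∘ (fun n => n + 1) := by
      funext m; simp [Function.comp, Nat.add_comm]
    rw [e]; exact h
  have hT2 : Tendsto (fun m => X s m) atTop (𝓝 (cfVal s)) := cf_tendsto hs
  have hT3 : Tendsto (fun m => (b 0 : ℝ) + 1 / X s m) atTop
      (𝓝 ((b 0 : ℝ) + 1 / cfVal s)) :=
    tendsto_const_nhds.add (tendsto_const_nhds.div hT2 (ne_of_gt htpos))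
  exact tendsto_nhds_unique hT1 (by simpa only [← key] using hT3)

theorem Tail_rec (hb : ∀ k, 1 ≤ b (k+1)) (k : ℕ) :
    Tail b (k+1) = (b (k+1) : ℝ) + 1 / Tail b (k+2) := by
  have h := cfVal_rec (b := fun j => b (k+1+j)) (fun j => hb (k+1+j))
  have e : (fun j => b (k+1+(1+j))) = (fun j => b (k+2+j)) := by
    funext j; congr 1; omega
  rw [show (fun j => (fun j => b (k+1+j)) (1+j)) = (fun j => b (k+1+(1+j))) from rfl, e] at h
  exact h

theorem Tail_pos (hb : ∀ k, 1 ≤ b (k+1)) (k : ℕ) : 0 < Tail b (k+1) :=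
  lt_trans zero_lt_one (Tail_gt_one hb k)

theorem uTail_mem (hb : ∀ k, 1 ≤ b (k+1)) (k : ℕ) :
    1 / Tail b (k+1) ∈ Set.Icc (0:ℝ) 1 := by
  have h1 := Tail_gt_one hb k
  constructor
  · positivity
  · rw [div_le_one (by linarith)]; linarith

/-- `[b (k+1), b k, …, b 1]` -/
def backList (b : ℕ → ℤ) : ℕ → List ℤ
  | 0 => []
  | (k+1) => b (k+1) :: backList b k

theorem backList_mem (hb : ∀ k, 1 ≤ b (k+1)) : ∀ k, ∀ x ∈ backList b k, 1 ≤ x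
  | 0 => by simp [backList]
  | (k+1) => by
      intro x hx
      rcases List.mem_cons.mp hx with h | h
      · rw [h]; exact hb k
      · exact backList_mem hb k x h

theorem ratio_eq (hb : ∀ k, 1 ≤ b (k+1)) :
    ∀ k, (cfDen b k : ℝ) / (cfDen b (k+1) : ℝ) = val (backList b (k+1)) 0
  | 0 => by
      have e0 : cfDen b 0 = (1:ℤ) := rfl
      have e1 : cfDen b 1 = b 1 := rfl
      show (cfDen b 0 : ℝ) / (cfDen b 1 : ℝ) = 1 / ((b 1 : ℝ) + val [] 0)
      rw [e0, e1, val_nil, add_zero]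
      norm_num
  | (k+1) => by
      have ih := ratio_eq hb k
      have h0 := cfDen_posR hb k
      have h1 := cfDen_posR hb (k+1)
      have hb2 : (1:ℝ) ≤ (b (k+2) : ℝ) := by exact_mod_cast hb (k+1)
      show (cfDen b (k+1) : ℝ) / (cfDen b (k+2) : ℝ)
          = 1 / ((b (k+2) : ℝ) + val (backList b (k+1)) 0)
      have hden : (cfDen b (k+2) : ℝ) = (b (k+2) : ℝ) * (cfDen b (k+1) : ℝ) + (cfDen b k : ℝ) := by
        exact_mod_cast congrArg (fun z : ℤ => (z:ℝ)) (cfDen_two (b := b) k)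
      have hB : (0:ℝ) < (b (k+2) : ℝ) + (cfDen b k : ℝ)/(cfDen b (k+1) : ℝ) := by positivity
      have hA : (0:ℝ) < (b (k+2) : ℝ) * (cfDen b (k+1) : ℝ) + (cfDen b k : ℝ) := by nlinarith
      rw [← ih, hden, div_eq_div_iff (ne_of_gt hA) (ne_of_gt hB)]
      field_simp
      try ring

/-- `[b j, b (j-1), …, b (j-d+1)]` -/
def downList (b : ℕ → ℤ) : ℕ → ℕ → List ℤ
  | _, 0 => []
  | j, (d+1) => b j :: downList b (j-1) d

@[simp] theorem downList_length (b : ℕ → ℤ) : ∀ j d, (downList b j d).length = d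
  | _, 0 => rfl
  | j, (d+1) => by simp [downList, downList_length b (j-1) d]

/-- `[b j, b (j+1), …, b (j+m-1)]` -/
def fwdList (b : ℕ → ℤ) : ℕ → ℕ → List ℤ
  | _, 0 => []
  | j, (m+1) => b j :: fwdList b (j+1) m

@[simp] theorem fwdList_length (b : ℕ → ℤ) : ∀ j m, (fwdList b j m).length = m
  | _, 0 => rfl
  | j, (m+1) => by simp [fwdList, fwdList_length b (j+1) m]

theorem backList_split (b : ℕ → ℤ) : ∀ d k, backList b (k+d) = downList b (k+d) d ++ backList b k
  | 0, k => rfl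
  | (d+1), k => by
      show b (k+d+1) :: backList b (k+d) = b (k+d+1) :: downList b (k+d+1-1) d ++ backList b k
      rw [show k+d+1-1 = k+d from rfl, backList_split b d k]
      rfl

theorem downList_congr {b b' : ℕ → ℤ} : ∀ d j i, (∀ l, l < d → b (j - l) = b' (i - l)) →
    downList b j d = downList b' i d
  | 0, _, _, _ => rfl
  | (d+1), j, i, h => by
      show b j :: downList b (j-1) d = b' i :: downList b' (i-1) d
      have h0 := h 0 (Nat.succ_pos d)
      simp only [Nat.sub_zero] at h0
      rw [h0, downList_congr d (j-1) (i-1) (fun l hl => by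
        rw [Nat.sub_sub, Nat.sub_sub, Nat.add_comm 1 l]
        exact h (l+1) (by omega))]

theorem fwdList_congr {b b' : ℕ → ℤ} : ∀ m j i, (∀ l, l < m → b (j + l) = b' (i + l)) →
    fwdList b j m = fwdList b' i m
  | 0, _, _, _ => rfl
  | (m+1), j, i, h => by
      show b j :: fwdList b (j+1) m = b' i :: fwdList b' (i+1) m
      have h0 := h 0 (Nat.succ_pos m)
      simp only [Nat.add_zero] at h0
      rw [h0, fwdList_congr m (j+1) (i+1) (fun l hl => by
        have := h (l+1) (by omega)
        rw [show j+(l+1) = j+1+l by omega, show i+(l+1) = i+1+l by omega] at this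
        exact this)]

theorem downList_mem (hb : ∀ k, 1 ≤ b (k+1)) : ∀ d j, d ≤ j →
    ∀ x ∈ downList b j d, 1 ≤ x
  | 0, _, _ => by simp [downList]
  | (d+1), j, hdj => by
      intro x hx
      rcases List.mem_cons.mp hx with h | h
      · rw [h]
        obtain ⟨j', rfl⟩ : ∃ j', j = j'+1 := ⟨j-1, by omega⟩
        exact hb j'
      · exact downList_mem hb d (j-1) (by omega) x h

theorem fwdList_mem (hb : ∀ k, 1 ≤ b (k+1)) : ∀ m j, 1 ≤ j →
    ∀ x ∈ fwdList b j m, 1 ≤ x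
  | 0, _, _ => by simp [fwdList]
  | (m+1), j, hj => by
      intro x hx
      rcases List.mem_cons.mp hx with h | h
      · rw [h]
        obtain ⟨j', rfl⟩ : ∃ j', j = j'+1 := ⟨j-1, by omega⟩
        exact hb j'
      · exact fwdList_mem hb m (j+1) (by omega) x h

theorem u_chain (hb : ∀ k, 1 ≤ b (k+1)) :
    ∀ m k, 1 / Tail b (k+1) = val (fwdList b (k+1) m) (1 / Tail b (k+1+m))
  | 0, k => rfl
  | (m+1), k => by
      have ih := u_chain hb m (k+1)
      show 1 / Tail b (k+1) = 1 / ((b (k+1) : ℝ) + val (fwdList b (k+2) m) (1 / Tail b (k+1+(m+1))))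
      have e : k+1+(m+1) = k+2+m := by omega
      rw [e]
      rw [← ih]
      rw [Tail_rec hb k]

theorem t_split (hb : ∀ k, 1 ≤ b (k+1)) (k m : ℕ) :
    Tail b (k+1) = (b (k+1) : ℝ) + val (fwdList b (k+2) m) (1 / Tail b (k+2+m)) := by
  rw [Tail_rec hb k, u_chain hb m (k+1)]

/-- `Λ_k = [b (k+1); b (k+2), …] + q_{k-1}/q_k` -/
noncomputable def Lam (b : ℕ → ℤ) (k : ℕ) : ℝ :=
  Tail b (k+1) + (cfDen b (k-1) : ℝ) / (cfDen b k : ℝ)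

/-- `D_k = q_k |q_k α - p_k|` -/
noncomputable def Dk (b : ℕ → ℤ) (k : ℕ) : ℝ :=
  (cfDen b k : ℝ) * |(cfDen b k : ℝ) * cfVal b - (cfNum b k : ℝ)|

theorem Lam_succ (k : ℕ) :
    Lam b (k+1) = Tail b (k+2) + (cfDen b k : ℝ) / (cfDen b (k+1) : ℝ) := rfl

theorem D_eq (hb : ∀ k, 1 ≤ b (k+1)) (k : ℕ) : Dk b (k+1) = 1 / Lam b (k+1) := by
  have herr := cf_err hb k
  have hq1 := cfDen_posR hb (k+1)
  have hq0 := cfDen_posR hb k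
  have hT := Tail_gt_one hb (k+1)
  have hden : (0:ℝ) < (cfDen b (k+1) : ℝ) * Tail b (k+2) + (cfDen b k : ℝ) := by positivity
  rw [Dk, herr, Lam_succ, abs_div, abs_pow, abs_neg, abs_one, one_pow, abs_of_pos hden,
    mul_one_div]
  rw [div_eq_div_iff (by positivity) (by positivity)]
  field_simp

theorem ratio_nonneg (hb : ∀ k, 1 ≤ b (k+1)) (k : ℕ) :
    (0:ℝ) ≤ (cfDen b k : ℝ) / (cfDen b (k+1) : ℝ) :=
  le_of_lt (div_pos (cfDen_posR hb k) (cfDen_posR hb (k+1)))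

theorem ratio_le_one (hb : ∀ k, 1 ≤ b (k+1)) (k : ℕ) :
    (cfDen b k : ℝ) / (cfDen b (k+1) : ℝ) ≤ 1 := by
  rw [div_le_one (cfDen_posR hb (k+1))]
  exact_mod_cast cfDen_mono hb k

theorem cfDen_le5 (hb : ∀ k, 1 ≤ b (k+1)) (hb4 : ∀ k, b (k+1) ≤ 4) :
    ∀ k, cfDen b (k+1) ≤ 5 * cfDen b k
  | 0 => by
      show b 1 ≤ 5 * 1
      linarith [hb4 0]
  | (k+1) => by
      rw [cfDen_two]
      have h1 := cfDen_mono hb k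
      have h2 := cfDen_pos hb k
      nlinarith [hb4 (k+1)]

theorem ratio_ge_fifth (hb : ∀ k, 1 ≤ b (k+1)) (hb4 : ∀ k, b (k+1) ≤ 4) (k : ℕ) :
    (1:ℝ)/5 ≤ (cfDen b k : ℝ) / (cfDen b (k+1) : ℝ) := by
  have h := cfDen_le5 hb hb4 k
  have h1 := cfDen_posR hb (k+1)
  rw [div_le_div_iff₀ (by norm_num) h1]
  have : ((cfDen b (k+1)) : ℝ) ≤ 5 * (cfDen b k : ℝ) := by exact_mod_cast h
  linarith

theorem Lam_gt_one (hb : ∀ k, 1 ≤ b (k+1)) (k : ℕ) : 1 < Lam b (k+1) := by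
  have h1 := Tail_gt_one hb (k+1)
  have h2 := ratio_nonneg hb k
  rw [Lam_succ]
  linarith

theorem Lam_lt_six (hb : ∀ k, 1 ≤ b (k+1)) (hb4 : ∀ k, b (k+1) ≤ 4) (k : ℕ) :
    Lam b (k+1) < 6 := by
  have h1 := Tail_lt hb hb4 (k+1)
  have h2 := ratio_le_one hb k
  rw [Lam_succ]
  linarith

theorem Lam_pos (hb : ∀ k, 1 ≤ b (k+1)) (k : ℕ) : 0 < Lam b (k+1) :=
  lt_trans zero_lt_one (Lam_gt_one hb k)

theorem D_bounds (hb : ∀ k, 1 ≤ b (k+1)) (hb4 : ∀ k, b (k+1) ≤ 4) (k : ℕ) :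
    1/6 < Dk b (k+1) ∧ Dk b (k+1) < 1 := by
  rw [D_eq hb k]
  have h1 := Lam_gt_one hb k
  have h2 := Lam_lt_six hb hb4 k
  constructor
  · rw [div_lt_div_iff₀ (by norm_num) (by linarith)]; linarith
  · rw [div_lt_one (by linarith)]; linarith

theorem abs_add_of_mul_pos {a c : ℝ} (h : 0 < a * c) : |a + c| = |a| + |c| := by
  rcases lt_trichotomy a 0 with ha | ha | ha
  · have hc : c < 0 := by nlinarith
    rw [abs_of_neg ha, abs_of_neg hc, abs_of_neg (by linarith)]
    ring
  · simp [ha] at h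
  · have hc : 0 < c := by nlinarith
    rw [abs_of_pos ha, abs_of_pos hc, abs_of_pos (by linarith)]

theorem best_approx (hb : ∀ k, 1 ≤ b (k+1)) (k : ℕ) (q p : ℤ) (hq1 : 1 ≤ q)
    (hq2 : q < cfDen b (k+2)) :
    |(cfDen b (k+1) : ℝ) * cfVal b - (cfNum b (k+1) : ℝ)| ≤ |(q:ℝ) * cfVal b - (p:ℝ)| := by
  have hsq : ((-1:ℤ))^(k+1) * ((-1:ℤ))^(k+1) = 1 := by
    rw [← pow_add]
    exact Even.neg_one_pow ⟨k+1, by ring⟩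
  have hdet := cf_det (b := b) (k+1)
  set x : ℤ := (-1)^(k+1) * (q * cfNum b (k+2) - p * cfDen b (k+2)) with hx
  set y : ℤ := (-1)^(k+1) * (p * cfDen b (k+1) - q * cfNum b (k+1)) with hy
  have hqe : x * cfDen b (k+1) + y * cfDen b (k+2) = q := by
    rw [hx, hy]
    linear_combination ((-1:ℤ)^(k+1) * q) * hdet + q * hsq
  have hpe : x * cfNum b (k+1) + y * cfNum b (k+2) = p := by
    rw [hx, hy]
    linear_combination ((-1:ℤ)^(k+1) * p) * hdet + p * hsq
  have herr1 := cf_err hb k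
  have herr2 := cf_err hb (k+1)
  have hq1p := cfDen_posR hb (k+1)
  have hq0p := cfDen_posR hb k
  have hq2p := cfDen_posR hb (k+2)
  have hT1 := Tail_gt_one hb (k+1)
  have hT2 := Tail_gt_one hb (k+2)
  have hden1 : (0:ℝ) < (cfDen b (k+1) : ℝ) * Tail b (k+2) + (cfDen b k : ℝ) := by positivity
  have hden2 : (0:ℝ) < (cfDen b (k+2) : ℝ) * Tail b (k+3) + (cfDen b (k+1) : ℝ) := by positivity
  have hs1ne : (cfDen b (k+1) : ℝ) * cfVal b - (cfNum b (k+1) : ℝ) ≠ 0 := by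
    rw [herr1]
    apply div_ne_zero
    · apply pow_ne_zero; norm_num
    · exact ne_of_gt hden1
  have hs12 : ((cfDen b (k+1) : ℝ) * cfVal b - (cfNum b (k+1) : ℝ))
      * ((cfDen b (k+2) : ℝ) * cfVal b - (cfNum b (k+2) : ℝ)) < 0 := by
    rw [herr1, herr2]
    rw [div_mul_div_comm]
    apply div_neg_of_neg_of_pos
    · rw [← pow_add]
      have : Odd (k+1+(k+2)) := ⟨k+1, by ring⟩
      rw [this.neg_one_pow]
      norm_num
    · positivity
  have hrel : (q:ℝ) * cfVal b - (p:ℝ)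
      = (x:ℝ) * ((cfDen b (k+1) : ℝ) * cfVal b - (cfNum b (k+1) : ℝ))
        + (y:ℝ) * ((cfDen b (k+2) : ℝ) * cfVal b - (cfNum b (k+2) : ℝ)) := by
    have hq' : ((x : ℝ) * (cfDen b (k+1) : ℝ) + (y:ℝ) * (cfDen b (k+2) : ℝ)) = (q:ℝ) := by
      exact_mod_cast congrArg (fun z : ℤ => (z:ℝ)) hqe
    have hp' : ((x : ℝ) * (cfNum b (k+1) : ℝ) + (y:ℝ) * (cfNum b (k+2) : ℝ)) = (p:ℝ) := by
      exact_mod_cast congrArg (fun z : ℤ => (z:ℝ)) hpe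
    linear_combination hp' - cfVal b * hq'
  rcases eq_or_ne y 0 with hy0 | hy0
  · have hxq : x * cfDen b (k+1) = q := by rw [← hqe, hy0]; ring
    have hxne : x ≠ 0 := by
      intro h0
      rw [h0] at hxq
      simp at hxq
      omega
    have hxabs : (1:ℝ) ≤ |(x:ℝ)| := by
      have := Int.one_le_abs hxne
      exact_mod_cast this
    rw [hrel, hy0]
    push_cast
    rw [zero_mul, add_zero, abs_mul]
    nlinarith [abs_nonneg ((cfDen b (k+1) : ℝ) * cfVal b - (cfNum b (k+1) : ℝ))]
  · rcases eq_or_ne x 0 with hx0 | hx0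
    · exfalso
      have hyq : y * cfDen b (k+2) = q := by rw [← hqe, hx0]; ring
      have hq2pos := cfDen_pos hb (k+2)
      have hy1 : 1 ≤ y := by nlinarith
      nlinarith
    · -- both nonzero: x * y < 0
      have hq1pos := cfDen_pos hb (k+1)
      have hq2pos := cfDen_pos hb (k+2)
      have hxy : x * y < 0 := by
        rcases lt_or_gt_of_ne hy0 with hyneg | hypos
        · have hxpos : 0 < x := by
            by_contra h0
            push_neg at h0
            nlinarith
          nlinarith
        · have hxneg : x < 0 := by
            by_contra h0
            push_neg at h0
            nlinarith
          nlinarith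
      have hprod : 0 < ((x:ℝ) * ((cfDen b (k+1) : ℝ) * cfVal b - (cfNum b (k+1) : ℝ)))
          * ((y:ℝ) * ((cfDen b (k+2) : ℝ) * cfVal b - (cfNum b (k+2) : ℝ))) := by
        have hxyR : ((x:ℝ)) * (y:ℝ) < 0 := by exact_mod_cast hxy
        nlinarith
      rw [hrel, abs_add_of_mul_pos hprod, abs_mul]
      have hxabs : (1:ℝ) ≤ |(x:ℝ)| := by
        have := Int.one_le_abs hx0
        exact_mod_cast this
      nlinarith [abs_nonneg ((cfDen b (k+1) : ℝ) * cfVal b - (cfNum b (k+1) : ℝ)),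
        abs_nonneg ((y:ℝ) * ((cfDen b (k+2) : ℝ) * cfVal b - (cfNum b (k+2) : ℝ)))]

/-- the function whose liminf is `1/μ(α)` -/
noncomputable def fQ (b : ℕ → ℤ) (q : ℕ) : ℝ :=
  ⨅ p : ℤ, |(q : ℝ) * ((q : ℝ) * cfVal b - (p : ℝ))|

theorem fQ_bddBelow (b : ℕ → ℤ) (q : ℕ) :
    BddBelow (Set.range fun p : ℤ => |(q : ℝ) * ((q : ℝ) * cfVal b - (p : ℝ))|) :=
  ⟨0, by rintro x ⟨p, rfl⟩; exact abs_nonneg _⟩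

theorem fQ_nonneg (b : ℕ → ℤ) (q : ℕ) : 0 ≤ fQ b q :=
  le_ciInf (fun p => abs_nonneg _)

theorem fQ_le_D (hb : ∀ k, 1 ≤ b (k+1)) (k : ℕ) : fQ b ((cfDen b k).toNat) ≤ Dk b k := by
  have hcast : (((cfDen b k).toNat : ℕ) : ℝ) = (cfDen b k : ℝ) := by
    exact_mod_cast congrArg (fun z : ℤ => (z:ℝ))
      (Int.toNat_of_nonneg (le_of_lt (lt_of_lt_of_le zero_lt_one (cfDen_pos hb k))))
  have h := ciInf_le (fQ_bddBelow b ((cfDen b k).toNat)) (cfNum b k)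
  refine le_trans h (le_of_eq ?_)
  rw [hcast, Dk, abs_mul, abs_of_pos (cfDen_posR hb k)]

theorem D_ev_bounds (hb : ∀ k, 1 ≤ b (k+1)) (hb4 : ∀ k, b (k+1) ≤ 4) :
    ∀ᶠ k in atTop, 1/6 < Dk b k ∧ Dk b k < 1 := by
  rw [eventually_atTop]
  exact ⟨1, fun k hk => by
    obtain ⟨j, rfl⟩ : ∃ j, k = j+1 := ⟨k-1, by omega⟩
    exact D_bounds hb hb4 j⟩

theorem D_freq_le_one (hb : ∀ k, 1 ≤ b (k+1)) (hb4 : ∀ k, b (k+1) ≤ 4) :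
    ∃ᶠ k in atTop, Dk b k ≤ 1 := by
  apply Eventually.frequently
  filter_upwards [D_ev_bounds hb hb4] with k hk using le_of_lt hk.2

theorem D_cobounded_ge (hb : ∀ k, 1 ≤ b (k+1)) (hb4 : ∀ k, b (k+1) ≤ 4) :
    IsCoboundedUnder (· ≥ ·) atTop (Dk b) :=
  IsCoboundedUnder.of_frequently_le (D_freq_le_one hb hb4)

theorem D_bounded_ge (hb : ∀ k, 1 ≤ b (k+1)) (hb4 : ∀ k, b (k+1) ≤ 4) :
    IsBoundedUnder (· ≥ ·) atTop (Dk b) :=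
  ⟨1/6, eventually_map.mpr (by filter_upwards [D_ev_bounds hb hb4] with k h using le_of_lt h.1)⟩

theorem D_bounded_le (hb : ∀ k, 1 ≤ b (k+1)) (hb4 : ∀ k, b (k+1) ≤ 4) :
    IsBoundedUnder (· ≤ ·) atTop (Dk b) :=
  ⟨1, eventually_map.mpr (by filter_upwards [D_ev_bounds hb hb4] with k h using le_of_lt h.2)⟩

theorem m_bounds (hb : ∀ k, 1 ≤ b (k+1)) (hb4 : ∀ k, b (k+1) ≤ 4) :
    1/6 ≤ liminf (Dk b) atTop ∧ liminf (Dk b) atTop ≤ 1 := by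
  constructor
  · exact le_liminf_of_le (D_cobounded_ge hb hb4)
      ((D_ev_bounds hb hb4).mono (fun k h => le_of_lt h.1))
  · exact liminf_le_of_frequently_le (D_freq_le_one hb hb4) (D_bounded_ge hb hb4)

theorem fQ_freq_le_one (hb : ∀ k, 1 ≤ b (k+1)) (hb4 : ∀ k, b (k+1) ≤ 4) :
    ∃ᶠ q in atTop, fQ b q ≤ 1 := by
  rw [frequently_atTop]
  intro N
  refine ⟨(cfDen b (N+1)).toNat, ?_, ?_⟩
  · have h1 := cfDen_ge hb (N+1)
    omega
  · exact le_trans (fQ_le_D hb (N+1)) (le_of_lt (D_bounds hb hb4 N).2)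

theorem fQ_cobounded_ge (hb : ∀ k, 1 ≤ b (k+1)) (hb4 : ∀ k, b (k+1) ≤ 4) :
    IsCoboundedUnder (· ≥ ·) atTop (fQ b) :=
  IsCoboundedUnder.of_frequently_le (fQ_freq_le_one hb hb4)

theorem fQ_bounded_ge (b : ℕ → ℤ) : IsBoundedUnder (· ≥ ·) atTop (fQ b) :=
  ⟨0, eventually_map.mpr (Eventually.of_forall (fun q => fQ_nonneg b q))⟩

/-- the key identity: `liminf fQ = liminf D`. -/
theorem liminf_fQ_eq (hb : ∀ k, 1 ≤ b (k+1)) (hb4 : ∀ k, b (k+1) ≤ 4) :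
    liminf (fQ b) atTop = liminf (Dk b) atTop := by
  set m := liminf (Dk b) atTop with hm
  apply le_antisymm
  · -- liminf fQ ≤ m
    apply le_of_forall_pos_le_add
    intro ε hε
    apply liminf_le_of_frequently_le _ (fQ_bounded_ge b)
    rw [frequently_atTop]
    intro N
    have hfreq : ∃ᶠ k in atTop, Dk b k < m + ε :=
      frequently_lt_of_liminf_lt (D_cobounded_ge hb hb4) (by linarith)
    obtain ⟨k, hkN, hkD⟩ := (frequently_atTop.mp hfreq) N
    refine ⟨(cfDen b k).toNat, ?_, ?_⟩
    · have h1 := cfDen_ge hb k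
      omega
    · exact le_trans (fQ_le_D hb k) (le_of_lt hkD)
  · -- m ≤ liminf fQ
    apply le_of_forall_pos_le_add
    intro ε hε
    rcases le_or_gt m ε with h | h
    · have h0 : (0:ℝ) ≤ liminf (fQ b) atTop :=
        le_liminf_of_le (fQ_cobounded_ge hb hb4)
          (Eventually.of_forall (fun q => fQ_nonneg b q))
      linarith
    · -- m - ε ≤ liminf fQ
      have hev : ∀ᶠ k in atTop, m - ε < Dk b k :=
        eventually_lt_of_lt_liminf (by linarith) (D_bounded_ge hb hb4)
      rw [eventually_atTop] at hev
      obtain ⟨K₀, hK₀⟩ := hev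
      set K := max K₀ 1 with hK
      have hKD : ∀ k, K ≤ k → m - ε < Dk b k := fun k hk => hK₀ k (le_trans (le_max_left _ _) hk)
      have hK1 : 1 ≤ K := le_max_right _ _
      have hlow : ∀ᶠ q in atTop, m - ε ≤ fQ b q := by
        rw [eventually_atTop]
        refine ⟨(cfDen b K).toNat, fun q hq => ?_⟩
        have hq1 : 1 ≤ q := by
          have h1 := cfDen_pos hb K
          omega
        have hqK : (cfDen b K : ℤ) ≤ (q : ℤ) := by
          have := Int.toNat_of_nonneg (le_of_lt (lt_of_lt_of_le zero_lt_one (cfDen_pos hb K)))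
          omega
        -- find greatest k with cfDen b k ≤ q
        set P : ℕ → Prop := fun j => cfDen b j ≤ (q : ℤ) with hP
        have hPK : P K := hqK
        have hKq : K ≤ q + 1 := by
          have := cfDen_ge hb K
          omega
        obtain ⟨k, hk_eq⟩ : ∃ k, Nat.findGreatest P (q+1) = k := ⟨_, rfl⟩
        have hPk : P k := hk_eq ▸ Nat.findGreatest_spec hKq hPK
        have hkK : K ≤ k := hk_eq ▸ Nat.le_findGreatest hKq hPK
        have hkq : k ≤ q := by
          have h1 := cfDen_ge hb k
          have h2 : (k : ℤ) ≤ (q : ℤ) := le_trans h1 hPk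
          exact_mod_cast h2
        have hnext : (q : ℤ) < cfDen b (k+1) := by
          by_contra hcon
          push_neg at hcon
          exact Nat.findGreatest_is_greatest (by rw [hk_eq]; exact lt_add_one k) (by omega) hcon
        obtain ⟨j, rfl⟩ : ∃ j, k = j + 1 := ⟨k - 1, by omega⟩
        -- best approximation
        have hba : ∀ p : ℤ, |(cfDen b (j+1) : ℝ) * cfVal b - (cfNum b (j+1) : ℝ)|
            ≤ |((q:ℤ) : ℝ) * cfVal b - (p : ℝ)| := by
          intro p
          apply best_approx hb j (q : ℤ) p (by exact_mod_cast hq1)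
          exact_mod_cast hnext
        apply le_ciInf
        intro p
        have hqR : (cfDen b (j+1) : ℝ) ≤ (q : ℝ) := by exact_mod_cast hPk
        have h2 : |(cfDen b (j+1) : ℝ) * cfVal b - (cfNum b (j+1) : ℝ)|
            ≤ |(q:ℝ) * cfVal b - (p:ℝ)| := by
          have h := hba p
          have e : (((q:ℤ)) : ℝ) = (q : ℝ) := by push_cast; rfl
          rwa [e] at h
        have h4 := cfDen_posR hb (j+1)
        have h5 := abs_nonneg ((cfDen b (j+1) : ℝ) * cfVal b - (cfNum b (j+1) : ℝ))
        calc m - ε ≤ Dk b (j+1) := le_of_lt (hKD _ hkK)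
          _ = (cfDen b (j+1) : ℝ) * |(cfDen b (j+1) : ℝ) * cfVal b - (cfNum b (j+1) : ℝ)| := rfl
          _ ≤ (q:ℝ) * |(q:ℝ) * cfVal b - (p:ℝ)| := by
              nlinarith [abs_nonneg ((q:ℝ) * cfVal b - (p:ℝ))]
          _ = |(q : ℝ) * ((q : ℝ) * cfVal b - (p : ℝ))| := by
              rw [abs_mul, abs_of_nonneg (by positivity : (0:ℝ) ≤ (q:ℝ))]
      have hfin : m - ε ≤ liminf (fQ b) atTop :=
        le_liminf_of_le (fQ_cobounded_ge hb hb4) hlow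
      linarith

theorem Tail_gt_b (hb : ∀ k, 1 ≤ b (k+1)) (k : ℕ) : (b (k+1) : ℝ) < Tail b (k+1) := by
  have h := cfVal_gt_b0 (b := fun j => b (k+1+j)) (tail_hb hb k)
  exact h

theorem Tail_inv_le (hb : ∀ k, 1 ≤ b (k+1)) (hb4 : ∀ k, b (k+1) ≤ 4) (k : ℕ) :
    1 / Tail b (k+1) ≤ 5/6 := by
  have h := Tail_rec hb k
  have h2 := Tail_lt hb hb4 (k+1)
  have h3 := Tail_pos hb (k+1)
  have hb1 : (1:ℝ) ≤ (b (k+1) : ℝ) := by exact_mod_cast hb k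
  have h5 : (1:ℝ)/5 ≤ 1/Tail b (k+2) := by
    rw [div_le_div_iff₀ (by norm_num) h3]
    linarith
  have h6 : (6:ℝ)/5 ≤ Tail b (k+1) := by rw [h]; linarith
  rw [div_le_div_iff₀ (by linarith) (by norm_num)]
  linarith

theorem ratio_le_56 (hb : ∀ k, 1 ≤ b (k+1)) (hb4 : ∀ k, b (k+1) ≤ 4) (k : ℕ) :
    (cfDen b (k+1) : ℝ) / (cfDen b (k+2) : ℝ) ≤ 5/6 := by
  have h1 := ratio_ge_fifth hb hb4 k
  have h2 := cfDen_posR hb k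
  have h3 := cfDen_posR hb (k+1)
  have h4 := cfDen_posR hb (k+2)
  have hden : (cfDen b (k+2) : ℝ) = (b (k+2) : ℝ) * (cfDen b (k+1) : ℝ) + (cfDen b k : ℝ) := by
    exact_mod_cast congrArg (fun z : ℤ => (z:ℝ)) (cfDen_two (b := b) k)
  have hb2 : (1:ℝ) ≤ (b (k+2) : ℝ) := by exact_mod_cast hb (k+1)
  rw [div_le_div_iff₀ h4 (by norm_num), hden]
  rw [div_le_div_iff₀ (by norm_num) h3] at h1
  nlinarith

theorem Lam_le_17_3 (hb : ∀ k, 1 ≤ b (k+1)) (hb4 : ∀ k, b (k+1) ≤ 4) (k : ℕ) :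
    Lam b (k+2) ≤ 17/3 := by
  have h1 : Lam b (k+1+1) = Tail b (k+3) + (cfDen b (k+1) : ℝ)/(cfDen b (k+2) : ℝ) :=
    Lam_succ (k+1)
  have h2 : Tail b (k+3) = (b (k+3) : ℝ) + 1 / Tail b (k+4) := Tail_rec hb (k+2)
  have h3 := Tail_inv_le hb hb4 (k+3)
  have h4 := ratio_le_56 hb hb4 k
  have hb3 : (b (k+3) : ℝ) ≤ 4 := by exact_mod_cast hb4 (k+2)
  have e : Lam b (k+2) = Lam b (k+1+1) := rfl
  rw [e, h1, h2]
  linarith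

theorem Lam_freq_aux (hb : ∀ k, 1 ≤ b (k+1)) (hb4 : ∀ k, b (k+1) ≤ 4) (k : ℕ) :
    17/10 ≤ Lam b (k+1) ∨ 17/10 ≤ Lam b (k+2) := by
  have hr1 := ratio_nonneg hb k
  have hr2 := ratio_nonneg hb (k+1)
  rcases le_or_gt 2 (b (k+2)) with h2 | h2
  · left
    have := Tail_gt_b hb (k+1)
    have h2R : (2:ℝ) ≤ (b (k+2) : ℝ) := by exact_mod_cast h2
    rw [Lam_succ]
    linarith
  · have hb2 : b (k+2) = 1 := by
      have h0 : (1:ℤ) ≤ b (k+2) := hb (k+1)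
      omega
    rcases le_or_gt 2 (b (k+3)) with h3 | h3
    · right
      have := Tail_gt_b hb (k+2)
      have h3R : (2:ℝ) ≤ (b (k+3) : ℝ) := by exact_mod_cast h3
      have e : Lam b (k+2) = Lam b (k+1+1) := rfl
      rw [e, Lam_succ]
      linarith
    · left
      have hb3 : b (k+3) = 1 := by
        have h0 : (1:ℤ) ≤ b (k+3) := hb (k+2)
        omega
      have ht2 : Tail b (k+2) = (b (k+2) : ℝ) + 1 / Tail b (k+3) := Tail_rec hb (k+1)
      have ht3 : Tail b (k+3) = (b (k+3) : ℝ) + 1 / Tail b (k+4) := Tail_rec hb (k+2)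
      have h4 : (1:ℝ) < Tail b (k+4) := Tail_gt_one hb (k+3)
      have h5 : (0:ℝ) < Tail b (k+3) := Tail_pos hb (k+2)
      have h6 : (0:ℝ) < Tail b (k+4) := Tail_pos hb (k+3)
      have hfifth := ratio_ge_fifth hb hb4 k
      -- Tail (k+3) < 2
      have h7 : Tail b (k+3) < 2 := by
        rw [ht3, hb3]
        have : 1 / Tail b (k+4) < 1 := by
          rw [div_lt_one h6]
          exact h4
        push_cast
        linarith
      have h8 : (1:ℝ)/2 < 1 / Tail b (k+3) := by
        rw [div_lt_div_iff₀ (by norm_num) h5]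
        linarith
      rw [Lam_succ, ht2, hb2]
      push_cast
      linarith

/-- every sufficiently late block occurs infinitely often -/
theorem blocks_eventually (c' : ℕ → ℤ) (hc' : ∀ k, 1 ≤ c' k ∧ c' k ≤ 4) (L : ℕ) :
    ∃ I₀ : ℕ, ∀ k, I₀ ≤ k → ∃ᶠ m in atTop, ∀ j, j < L → c' (m + j) = c' (k + j) := by
  set Bad := {k : ℕ | ¬ ∃ᶠ m in atTop, ∀ j, j < L → c' (m + j) = c' (k + j)} with hBad
  suffices hfin : Bad.Finite by
    obtain ⟨I₀, hI₀⟩ := hfin.bddAbove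
    refine ⟨I₀ + 1, fun k hk => ?_⟩
    by_contra hcon
    have h1 : k ∈ Bad := hcon
    have h2 := hI₀ h1
    omega
  by_contra hinf
  haveI : Infinite Bad := Set.infinite_coe_iff.mpr hinf
  set φ : Bad → (Fin L → Fin 5) := fun k j => ⟨(c' ((k:ℕ) + (j:ℕ))).toNat, by
    have h := hc' ((k:ℕ) + (j:ℕ)); omega⟩ with hφ
  obtain ⟨B, hB⟩ := Finite.exists_infinite_fiber φ
  obtain ⟨⟨k₁, hk₁Bad⟩, hk₁B⟩ := @Infinite.nonempty _ hB
  apply hk₁Bad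
  rw [Nat.frequently_atTop_iff_infinite]
  have hsub : Set.range (fun x : φ ⁻¹' {B} => ((x : Bad) : ℕ))
      ⊆ {m | ∀ j, j < L → c' (m + j) = c' (k₁ + j)} := by
    rintro x ⟨⟨⟨k₂, hk₂Bad⟩, hk₂B⟩, rfl⟩
    intro j hj
    show c' (k₂ + j) = c' (k₁ + j)
    have h1 : φ ⟨k₂, hk₂Bad⟩ = B := hk₂B
    have h2 : φ ⟨k₁, hk₁Bad⟩ = B := hk₁B
    have h3 : φ ⟨k₂, hk₂Bad⟩ ⟨j, hj⟩ = φ ⟨k₁, hk₁Bad⟩ ⟨j, hj⟩ := by rw [h1, h2]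
    have h4 : (c' (k₂ + j)).toNat = (c' (k₁ + j)).toNat := congrArg Fin.val h3
    have h5 := hc' (k₂ + j)
    have h6 := hc' (k₁ + j)
    clear h3 h1 h2
    omega
  apply Set.Infinite.mono hsub
  apply Set.infinite_range_of_injective
  intro x y hxy
  exact Subtype.ext (Subtype.ext hxy)

/-- the central comparison: matched blocks give close `Λ` values. -/
theorem Lam_close {a a' : ℕ → ℤ} (ha : ∀ k, 1 ≤ a (k+1)) (ha' : ∀ k, 1 ≤ a' (k+1))
    (n1 : ℕ) (i0 j0 : ℕ)
    (hmatch : ∀ l : ℕ, l ≤ 2*(n1+1) → a' (i0 + 1 + l) = a (j0 + 1 + l)) :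
    |Lam a' (i0 + n1 + 2) - Lam a (j0 + n1 + 2)| ≤ (1/2:ℝ)^n1 + (1/2:ℝ)^(n1+2) := by
  -- forward tails
  have ht' : Tail a' (i0+n1+3) = (a' (i0+n1+3) : ℝ)
      + val (fwdList a' (i0+n1+4) n1) (1 / Tail a' (i0+n1+4+n1)) := by
    have h := t_split ha' (i0+n1+2) n1
    rwa [show i0+n1+2+1 = i0+n1+3 from by omega, show i0+n1+2+2 = i0+n1+4 from by omega] at h
  have ht : Tail a (j0+n1+3) = (a (j0+n1+3) : ℝ)
      + val (fwdList a (j0+n1+4) n1) (1 / Tail a (j0+n1+4+n1)) := by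
    have h := t_split ha (j0+n1+2) n1
    rwa [show j0+n1+2+1 = j0+n1+3 from by omega, show j0+n1+2+2 = j0+n1+4 from by omega] at h
  have hctr : a' (i0+n1+3) = a (j0+n1+3) := by
    have h := hmatch (n1+2) (by omega)
    rwa [show i0+1+(n1+2) = i0+n1+3 from by omega, show j0+1+(n1+2) = j0+n1+3 from by omega] at h
  have hfwd : fwdList a' (i0+n1+4) n1 = fwdList a (j0+n1+4) n1 := by
    apply fwdList_congr
    intro l hl
    have h := hmatch (n1+3+l) (by omega)
    rwa [show i0+1+(n1+3+l) = i0+n1+4+l from by omega,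
      show j0+1+(n1+3+l) = j0+n1+4+l from by omega] at h
  have hx' : 1 / Tail a' (i0+n1+4+n1) ∈ Set.Icc (0:ℝ) 1 := by
    have h := uTail_mem ha' (i0+n1+3+n1)
    rwa [show i0+n1+3+n1+1 = i0+n1+4+n1 from by omega] at h
  have hx : 1 / Tail a (j0+n1+4+n1) ∈ Set.Icc (0:ℝ) 1 := by
    have h := uTail_mem ha (j0+n1+3+n1)
    rwa [show j0+n1+3+n1+1 = j0+n1+4+n1 from by omega] at h
  have hTdiff : |Tail a' (i0+n1+3) - Tail a (j0+n1+3)| ≤ (1/2:ℝ)^n1 := by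
    rw [ht', ht, hctr, hfwd]
    have e : (a (j0+n1+3) : ℝ) + val (fwdList a (j0+n1+4) n1) (1 / Tail a' (i0+n1+4+n1))
        - ((a (j0+n1+3) : ℝ) + val (fwdList a (j0+n1+4) n1) (1 / Tail a (j0+n1+4+n1)))
        = val (fwdList a (j0+n1+4) n1) (1 / Tail a' (i0+n1+4+n1))
          - val (fwdList a (j0+n1+4) n1) (1 / Tail a (j0+n1+4+n1)) := by ring
    rw [e]
    have hmem : ∀ x ∈ fwdList a (j0+n1+4) n1, 1 ≤ x := fwdList_mem ha n1 (j0+n1+4) (by omega)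
    have h := val_contract (fwdList a (j0+n1+4) n1) hmem _ _ hx' hx
    rwa [fwdList_length] at h
  -- backward ratios
  have hr' : (cfDen a' (i0+n1+1) : ℝ)/(cfDen a' (i0+n1+2) : ℝ)
      = val (downList a' (i0+n1+2) (n1+2)) (val (backList a' i0) 0) := by
    have h0 := ratio_eq ha' (i0+n1+1)
    rw [show i0+n1+1+1 = i0+n1+2 from by omega] at h0
    rw [h0]
    have h := backList_split a' (n1+2) i0
    rw [show i0+(n1+2) = i0+n1+2 from by omega] at h
    rw [h, val_append]
  have hr : (cfDen a (j0+n1+1) : ℝ)/(cfDen a (j0+n1+2) : ℝ)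
      = val (downList a (j0+n1+2) (n1+2)) (val (backList a j0) 0) := by
    have h0 := ratio_eq ha (j0+n1+1)
    rw [show j0+n1+1+1 = j0+n1+2 from by omega] at h0
    rw [h0]
    have h := backList_split a (n1+2) j0
    rw [show j0+(n1+2) = j0+n1+2 from by omega] at h
    rw [h, val_append]
  have hdown : downList a' (i0+n1+2) (n1+2) = downList a (j0+n1+2) (n1+2) := by
    apply downList_congr
    intro l hl
    have h := hmatch (n1+1-l) (by omega)
    rwa [show i0+1+(n1+1-l) = i0+n1+2-l from by omega,
      show j0+1+(n1+1-l) = j0+n1+2-l from by omega] at h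
  have hy' : val (backList a' i0) 0 ∈ Set.Icc (0:ℝ) 1 :=
    val_mem_Icc (backList_mem ha' i0) (by constructor <;> norm_num)
  have hy : val (backList a j0) 0 ∈ Set.Icc (0:ℝ) 1 :=
    val_mem_Icc (backList_mem ha j0) (by constructor <;> norm_num)
  have hRdiff : |(cfDen a' (i0+n1+1) : ℝ)/(cfDen a' (i0+n1+2) : ℝ)
      - (cfDen a (j0+n1+1) : ℝ)/(cfDen a (j0+n1+2) : ℝ)| ≤ (1/2:ℝ)^(n1+2) := by
    rw [hr', hr, hdown]
    have hmem : ∀ x ∈ downList a (j0+n1+2) (n1+2), 1 ≤ x :=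
      downList_mem ha (n1+2) (j0+n1+2) (by omega)
    have h := val_contract (downList a (j0+n1+2) (n1+2)) hmem _ _ hy' hy
    rwa [downList_length] at h
  -- combine
  have hL' : Lam a' (i0+n1+2) = Tail a' (i0+n1+3)
      + (cfDen a' (i0+n1+1) : ℝ)/(cfDen a' (i0+n1+2) : ℝ) := by
    have h := Lam_succ (b := a') (i0+n1+1)
    rwa [show i0+n1+1+1 = i0+n1+2 from by omega, show i0+n1+1+2 = i0+n1+3 from by omega] at h
  have hL : Lam a (j0+n1+2) = Tail a (j0+n1+3)
      + (cfDen a (j0+n1+1) : ℝ)/(cfDen a (j0+n1+2) : ℝ) := by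
    have h := Lam_succ (b := a) (j0+n1+1)
    rwa [show j0+n1+1+1 = j0+n1+2 from by omega, show j0+n1+1+2 = j0+n1+3 from by omega] at h
  rw [hL', hL]
  have e : Tail a' (i0+n1+3) + (cfDen a' (i0+n1+1) : ℝ)/(cfDen a' (i0+n1+2) : ℝ)
      - (Tail a (j0+n1+3) + (cfDen a (j0+n1+1) : ℝ)/(cfDen a (j0+n1+2) : ℝ))
      = (Tail a' (i0+n1+3) - Tail a (j0+n1+3))
        + ((cfDen a' (i0+n1+1) : ℝ)/(cfDen a' (i0+n1+2) : ℝ)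
          - (cfDen a (j0+n1+1) : ℝ)/(cfDen a (j0+n1+2) : ℝ)) := by ring
  rw [e]
  calc |_| ≤ |Tail a' (i0+n1+3) - Tail a (j0+n1+3)|
      + |(cfDen a' (i0+n1+1) : ℝ)/(cfDen a' (i0+n1+2) : ℝ)
        - (cfDen a (j0+n1+1) : ℝ)/(cfDen a (j0+n1+2) : ℝ)| := abs_add_le _ _
    _ ≤ (1/2:ℝ)^n1 + (1/2:ℝ)^(n1+2) := add_le_add hTdiff hRdiff

end CF

end S13

open S13 in
set_option maxHeartbeats 1000000 in
theorem stmt13 (n : ℕ) (c c' : ℕ → ℤ)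
    (hc : ∀ k, 1 ≤ c k ∧ c k ≤ 4) (hc' : ∀ k, 1 ≤ c' k ∧ c' k ≤ 4)
    (hblocks : ∀ k : ℕ,
      (∃ᶠ m in atTop, ∀ j, j < 2 * n + 1 → c' (m + j) = c' (k + j)) →
      (∃ᶠ m in atTop, ∀ j, j < 2 * n + 1 → c (m + j) = c' (k + j))) :
    lagrangeConst (cfZero c') < lagrangeConst (cfZero c) + 2 * (2 : ℝ) ^ (-((n : ℤ) - 1)) := by
  classical
  set a : ℕ → ℤ := fun k => if k = 0 then 0 else c (k - 1) with ha_def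
  set a' : ℕ → ℤ := fun k => if k = 0 then 0 else c' (k - 1) with ha'_def
  have ha : ∀ k, 1 ≤ a (k+1) := fun k => by
    rw [ha_def]; simpa using (hc k).1
  have ha4 : ∀ k, a (k+1) ≤ 4 := fun k => by
    rw [ha_def]; simpa using (hc k).2
  have ha' : ∀ k, 1 ≤ a' (k+1) := fun k => by
    rw [ha'_def]; simpa using (hc' k).1
  have ha4' : ∀ k, a' (k+1) ≤ 4 := fun k => by
    rw [ha'_def]; simpa using (hc' k).2
  have hconv : lagrangeConst (cfZero c) = (liminf (Dk a) atTop)⁻¹ := by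
    have h1 : lagrangeConst (cfZero c) = (liminf (fQ a) atTop)⁻¹ := by rw [ha_def]; rfl
    rw [h1, liminf_fQ_eq ha ha4]
  have hconv' : lagrangeConst (cfZero c') = (liminf (Dk a') atTop)⁻¹ := by
    have h1 : lagrangeConst (cfZero c') = (liminf (fQ a') atTop)⁻¹ := by rw [ha'_def]; rfl
    rw [h1, liminf_fQ_eq ha' ha4']
  rw [hconv, hconv']
  set m := liminf (Dk a) atTop with hm_def
  set m' := liminf (Dk a') atTop with hm'_def
  obtain ⟨hm1, hm2⟩ := m_bounds ha ha4
  obtain ⟨hm1', hm2'⟩ := m_bounds ha' ha4'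
  have hmpos : (0:ℝ) < m := lt_of_lt_of_le (by norm_num) hm1
  have hm'pos : (0:ℝ) < m' := lt_of_lt_of_le (by norm_num) hm1'
  rcases Nat.eq_zero_or_pos n with hn0 | hnpos
  · -- n = 0 : crude bounds
    subst hn0
    have hexp : 2 * (2:ℝ) ^ (-(((0:ℕ):ℤ) - 1)) = 4 := by norm_num
    rw [hexp]
    -- m' ≥ 3/17
    have hev' : ∀ᶠ k in atTop, (3:ℝ)/17 ≤ Dk a' k := by
      rw [eventually_atTop]
      refine ⟨2, fun k hk => ?_⟩
      obtain ⟨k0, rfl⟩ : ∃ k0, k = k0 + 2 := ⟨k - 2, by omega⟩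
      have hD : Dk a' (k0+2) = 1 / Lam a' (k0+2) := D_eq ha' (k0+1)
      have hLle : Lam a' (k0+2) ≤ 17/3 := Lam_le_17_3 ha' ha4' k0
      have hLpos : (0:ℝ) < Lam a' (k0+2) := Lam_pos ha' (k0+1)
      rw [hD, div_le_div_iff₀ (by norm_num) hLpos]
      linarith
    have hm3' : (3:ℝ)/17 ≤ m' := le_liminf_of_le (D_cobounded_ge ha' ha4') hev'
    -- m ≤ 10/17
    have hfreq : ∃ᶠ k in atTop, Dk a k ≤ 10/17 := by
      rw [frequently_atTop]
      intro N
      have key : ∀ j : ℕ, 17/10 ≤ Lam a (j+1) → Dk a (j+1) ≤ 10/17 := by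
        intro j hL
        have hLpos : (0:ℝ) < Lam a (j+1) := Lam_pos ha j
        rw [D_eq ha j, div_le_div_iff₀ hLpos (by norm_num)]
        linarith
      rcases Lam_freq_aux ha ha4 N with h | h
      · exact ⟨N+1, by omega, key N h⟩
      · refine ⟨N+2, by omega, ?_⟩
        have := key (N+1) (by
          have e : Lam a (N+1+1) = Lam a (N+2) := rfl
          rw [e]; exact h)
        exact this
    have hm3 : m ≤ 10/17 := liminf_le_of_frequently_le hfreq (D_bounded_ge ha ha4)
    have h1 : m'⁻¹ ≤ 17/3 := by
      rw [inv_eq_one_div, div_le_div_iff₀ hm'pos (by norm_num)]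
      linarith
    have h2 : (17:ℝ)/10 ≤ m⁻¹ := by
      rw [inv_eq_one_div, le_div_iff₀ hmpos]
      linarith
    linarith
  · -- n ≥ 1
    obtain ⟨n1, rfl⟩ : ∃ n1, n = n1 + 1 := ⟨n - 1, by omega⟩
    set w : ℝ := (1/2:ℝ)^n1 with hw_def
    have hwpos : (0:ℝ) < w := by rw [hw_def]; positivity
    have hexp : (2:ℝ) ^ (-(((n1+1:ℕ):ℤ) - 1)) = w := by
      have e1 : -(((n1+1:ℕ):ℤ) - 1) = -(n1:ℤ) := by push_cast; ring
      rw [e1, zpow_neg, zpow_natCast, hw_def, one_div, inv_pow]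
    rw [hexp]
    set δ : ℝ := (1/2:ℝ)^n1 + (1/2:ℝ)^(n1+2) with hδ_def
    have hδle : δ ≤ 5/4 * w := by
      have e : (1/2:ℝ)^(n1+2) = w * (1/4) := by
        rw [pow_add, hw_def]
        norm_num
      rw [hδ_def, e, hw_def]
      linarith
    have hδpos : (0:ℝ) < δ := by rw [hδ_def]; positivity
    set ε : ℝ := min (3/400 * w) (1/12) with hε_def
    have hεpos : (0:ℝ) < ε := by
      rw [hε_def]
      apply lt_min (by linarith) (by norm_num)
    have hε12 : ε ≤ 1/12 := min_le_right _ _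
    have hε72 : 72 * ε ≤ 27/50 * w := by
      have := min_le_left (3/400 * w) (1/12)
      rw [← hε_def] at this
      linarith
    have hmε_pos : (0:ℝ) < m - ε := by linarith
    -- eventually D_k > m - ε
    have hevD : ∀ᶠ k in atTop, m - ε < Dk a k :=
      eventually_lt_of_lt_liminf (by rw [← hm_def]; linarith) (D_bounded_ge ha ha4)
    rw [eventually_atTop] at hevD
    obtain ⟨M, hM⟩ := hevD
    -- blocks occur infinitely often
    obtain ⟨I₀, hI₀⟩ := blocks_eventually c' hc' (2*(n1+1)+1)
    set W : ℝ := 1/(m-ε) + δ with hW_def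
    have hWpos : (0:ℝ) < W := by
      rw [hW_def]
      positivity
    have hev' : ∀ᶠ i in atTop, 1/W ≤ Dk a' i := by
      rw [eventually_atTop]
      refine ⟨I₀ + n1 + 2, fun i hi => ?_⟩
      obtain ⟨i0, hi0, rfl⟩ : ∃ i0, I₀ ≤ i0 ∧ i = i0 + n1 + 2 :=
        ⟨i - n1 - 2, by omega, by omega⟩
      have hfr := hblocks i0 (hI₀ i0 hi0)
      obtain ⟨o, hoM, hoblk⟩ := frequently_atTop.mp hfr M
      have hmatch : ∀ l, l ≤ 2*(n1+1) → a' (i0+1+l) = a (o+1+l) := by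
        intro l hl
        have h := hoblk l (by omega)
        rw [ha'_def, ha_def]
        simp only
        rw [if_neg (by omega), if_neg (by omega),
          show i0+1+l-1 = i0+l from by omega, show o+1+l-1 = o+l from by omega]
        exact h.symm
      have hclose := Lam_close ha ha' n1 i0 o hmatch
      have hDj : m - ε < Dk a (o+n1+2) := hM (o+n1+2) (by omega)
      have hDjeq : Dk a (o+n1+2) = 1 / Lam a (o+n1+2) := D_eq ha (o+n1+1)
      have hLpos : (0:ℝ) < Lam a (o+n1+2) := Lam_pos ha (o+n1+1)
      have hLlt : Lam a (o+n1+2) < 1/(m-ε) := by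
        rw [hDjeq] at hDj
        rw [lt_div_iff₀ hmε_pos]
        have h1 : Lam a (o+n1+2) * (m - ε) < Lam a (o+n1+2) * (1 / Lam a (o+n1+2)) :=
          mul_lt_mul_of_pos_left hDj hLpos
        rwa [mul_one_div, div_self (ne_of_gt hLpos)] at h1
      have hL'pos : (0:ℝ) < Lam a' (i0+n1+2) := Lam_pos ha' (i0+n1+1)
      have hL'lt : Lam a' (i0+n1+2) < W := by
        have h1 := abs_sub_le_iff.mp hclose
        rw [hW_def]
        have h2 : Lam a' (i0+n1+2) ≤ Lam a (o+n1+2) + δ := by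
          rw [hδ_def]
          linarith [h1.1]
        linarith
      have hDi : Dk a' (i0+n1+2) = 1 / Lam a' (i0+n1+2) := D_eq ha' (i0+n1+1)
      rw [hDi]
      exact one_div_le_one_div_of_le hL'pos (le_of_lt hL'lt)
    have hm'W : 1/W ≤ m' := le_liminf_of_le (D_cobounded_ge ha' ha4') hev'
    -- final arithmetic
    have h1 : m'⁻¹ ≤ W := by
      rw [inv_eq_one_div, div_le_iff₀ hm'pos]
      rw [div_le_iff₀ hWpos] at hm'W
      linarith [mul_comm m' W]
    have h2 : 1/(m-ε) ≤ 1/m + 72*ε := by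
      have e : 1/(m-ε) - 1/m = ε/(m*(m-ε)) := by
        field_simp
        ring
      have hbound : (1:ℝ)/72 ≤ m*(m-ε) := by
        nlinarith [mul_nonneg (by linarith : (0:ℝ) ≤ m - 1/6)
          (by linarith : (0:ℝ) ≤ m - ε - 1/12)]
      have h3 : ε/(m*(m-ε)) ≤ 72*ε := by
        rw [div_le_iff₀ (by positivity)]
        nlinarith [mul_le_mul_of_nonneg_left hbound (le_of_lt hεpos)]
      linarith
    have h4 : m⁻¹ = 1/m := inv_eq_one_div m
    rw [hW_def] at h1
    rw [h4]
    linarith
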